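/- The quantile Zenga index decreases under a uniform increase in incomes: for every c > 0 and every p ∈ (0,1), qZ(p; Q + c) ≤ qZ(p; Q), and consequently qZI(Q + c) ≤ qZI(Q), where Q + c denotes the function p ↦ Q(p) + c (the quantile function of the shifted variable X + c). -/
import Mathlib


open MeasureTheory Filter Set

/-- The quantile Zenga curve `qZ(p; Q) = 1 - Q(p/2)/Q((1+p)/2)`. -/
noncomputable def qZcurve (Q : ℝ → ℝ) (p : ℝ) : ℝ := 1 - Q (p / 2) / Q ((1 + p) / 2)

/-- The quantile Zenga index `qZI(Q) = ∫₀¹ qZ(p; Q) dp`. -/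
noncomputable def qZI (Q : ℝ → ℝ) : ℝ := ∫ p in (0 : ℝ)..1, qZcurve Q p

lemma half_mem {p : ℝ} (hp : p ∈ Set.Ioo (0 : ℝ) 1) : p / 2 ∈ Set.Ioo (0 : ℝ) 1 := by
  constructor <;> [linarith [hp.1]; linarith [hp.2]]

lemma half1_mem {p : ℝ} (hp : p ∈ Set.Ioo (0 : ℝ) 1) : (1 + p) / 2 ∈ Set.Ioo (0 : ℝ) 1 := by
  constructor <;> [linarith [hp.1]; linarith [hp.2]]

lemma qZ_integrable (Q : ℝ → ℝ)
    (hQpos : ∀ p ∈ Set.Ioo (0 : ℝ) 1, 0 < Q p)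
    (hQmono : MonotoneOn Q (Set.Ioo (0 : ℝ) 1)) :
    IntervalIntegrable (qZcurve Q) MeasureTheory.volume 0 1 := by
  rw [intervalIntegrable_iff_integrableOn_Ioo_of_le (by norm_num)]
  have hf : AEMeasurable (fun p => Q (p / 2)) (volume.restrict (Set.Ioo (0:ℝ) 1)) := by
    apply aemeasurable_restrict_of_monotoneOn measurableSet_Ioo
    intro x hx y hy hxy
    exact hQmono (half_mem hx) (half_mem hy) (by linarith)
  have hg : AEMeasurable (fun p => Q ((1 + p) / 2)) (volume.restrict (Set.Ioo (0:ℝ) 1)) := by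
    apply aemeasurable_restrict_of_monotoneOn measurableSet_Ioo
    intro x hx y hy hxy
    exact hQmono (half1_mem hx) (half1_mem hy) (by linarith)
  have hm : AEMeasurable (qZcurve Q) (volume.restrict (Set.Ioo (0:ℝ) 1)) :=
    (aemeasurable_const.sub (hf.div hg))
  refine Integrable.mono' (integrable_const (1 : ℝ)) hm.aestronglyMeasurable ?_
  refine (ae_restrict_mem measurableSet_Ioo).mono fun p hp => ?_
  have h1 : 0 < Q (p / 2) := hQpos _ (half_mem hp)
  have h2 : Q (p / 2) ≤ Q ((1 + p) / 2) :=
    hQmono (half_mem hp) (half1_mem hp) (by linarith [hp.1])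
  have hr : 0 < Q (p / 2) / Q ((1 + p) / 2) := div_pos h1 (lt_of_lt_of_le h1 h2)
  have hr1 : Q (p / 2) / Q ((1 + p) / 2) ≤ 1 :=
    (div_le_one (lt_of_lt_of_le h1 h2)).mpr h2
  rw [Real.norm_eq_abs, abs_le, qZcurve]
  constructor <;> linarith

/-- The quantile Zenga index decreases under a uniform increase in incomes: for every
`c > 0`, `qZ(p; Q + c) ≤ qZ(p; Q)` for all `p ∈ (0,1)`, and `qZI(Q + c) ≤ qZI(Q)`. -/
theorem qZ_decreases_under_uniform_increase
(Q : ℝ → ℝ)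
    (hQpos : ∀ p ∈ Set.Ioo (0 : ℝ) 1, 0 < Q p)
    (hQmono : MonotoneOn Q (Set.Ioo (0 : ℝ) 1))
    (c : ℝ) (hc : 0 < c) :
    (∀ p ∈ Set.Ioo (0 : ℝ) 1, qZcurve (fun q => Q q + c) p ≤ qZcurve Q p) ∧
      qZI (fun q => Q q + c) ≤ qZI Q := by
  have hpos' : ∀ p ∈ Set.Ioo (0 : ℝ) 1, 0 < Q p + c := fun p hp => by
    linarith [hQpos p hp]
  have hmono' : MonotoneOn (fun q => Q q + c) (Set.Ioo (0 : ℝ) 1) := fun x hx y hy hxy => by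
    have := hQmono hx hy hxy; simpa using this
  have hpt : ∀ p ∈ Set.Ioo (0 : ℝ) 1, qZcurve (fun q => Q q + c) p ≤ qZcurve Q p := by
    intro p hp
    have h1 : 0 < Q (p / 2) := hQpos _ (half_mem hp)
    have h2 : Q (p / 2) ≤ Q ((1 + p) / 2) :=
      hQmono (half_mem hp) (half1_mem hp) (by linarith [hp.1])
    have h3 : 0 < Q ((1 + p) / 2) := lt_of_lt_of_le h1 h2
    have key : Q (p / 2) / Q ((1 + p) / 2) ≤ (Q (p / 2) + c) / (Q ((1 + p) / 2) + c) := by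
      rw [div_le_div_iff₀ h3 (by linarith)]
      nlinarith
    simp only [qZcurve]
    linarith
  refine ⟨hpt, ?_⟩
  have hI1 := qZ_integrable (fun q => Q q + c) hpos' hmono'
  have hI2 := qZ_integrable Q hQpos hQmono
  unfold qZI
  apply intervalIntegral.integral_mono_ae_restrict (by norm_num) hI1 hI2
  have : volume.restrict (Set.Icc (0:ℝ) 1) = volume.restrict (Set.Ioo (0:ℝ) 1) :=
    (Measure.restrict_congr_set Ioo_ae_eq_Icc).symm
  rw [this]
  exact (ae_restrict_mem measurableSet_Ioo).mono fun p hp => hpt p hp
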